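/- Let k ≥ 2, n = 2^k − 1, and let H be a perfect 1-error-correcting code in the n-cube. Fix h ∈ H and a coordinate i. For every coordinate j ≠ i there exist a unique h' ∈ H and a unique coordinate ℓ such that flipping coordinates i and j of h equals h' with coordinate ℓ flipped; moreover h' ≠ h and ℓ ≠ i, and the resulting map f sending j to this coordinate ℓ (and sending i to i) is a permutation of the n coordinates fixing i. -/

import Mathlib

/-- Flip coordinate `i` of a binary `n`-tuple. -/
def flipBit {n : ℕ} (v : Fin n → ZMod 2) (i : Fin n) : Fin n → ZMod 2 :=
  Function.update v i (v i + 1)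

/-- A perfect 1-error-correcting code in the `n`-cube: every vertex is within
Hamming distance 1 of exactly one codeword. -/
def IsPerfectCode {n : ℕ} (H : Set (Fin n → ZMod 2)) : Prop :=
  ∀ v : Fin n → ZMod 2, ∃! h, h ∈ H ∧ hammingDist v h ≤ 1

lemma zmod2_ne_iff (a b : ZMod 2) : a ≠ b ↔ a = b + 1 := by revert a b; decide

lemma flip_apply {n : ℕ} (v : Fin n → ZMod 2) (i x : Fin n) :
    flipBit v i x = if x = i then v i + 1 else v x := by
  rw [flipBit, Function.update_apply]

lemma flipBit_flip_flip {n : ℕ} (v : Fin n → ZMod 2) (i : Fin n) : flipBit (flipBit v i) i = v := by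
  funext x
  simp only [flip_apply]
  split_ifs with hx
  · subst hx; simp [add_assoc]; rfl
  · rfl

lemma flip_comm {n : ℕ} (v : Fin n → ZMod 2) (a b : Fin n) :
    flipBit (flipBit v a) b = flipBit (flipBit v b) a := by
  funext x
  simp only [flip_apply]
  by_cases hx : x = a <;> by_cases hy : x = b <;> by_cases hab : a = b <;>
    simp_all

lemma flip_ne {n : ℕ} (v : Fin n → ZMod 2) (i : Fin n) : flipBit v i ≠ v := by
  intro hq
  have := congrFun hq i
  simp [flip_apply] at this

lemma flip_idx_inj {n : ℕ} {v : Fin n → ZMod 2} {a b : Fin n}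
    (hq : flipBit v a = flipBit v b) : a = b := by
  by_contra hab
  have := congrFun hq a
  simp [flip_apply, hab] at this

lemma flip_cancel {n : ℕ} {v w : Fin n → ZMod 2} {a : Fin n}
    (hq : w = flipBit v a) : v = flipBit w a := by
  rw [hq, flipBit_flip_flip]

lemma dist_flip {n : ℕ} (v : Fin n → ZMod 2) (i : Fin n) :
    hammingDist (flipBit v i) v = 1 := by
  rw [hammingDist]
  convert Finset.card_singleton i
  ext x
  by_cases hx : x = i <;> simp [flip_apply, hx]

lemma dist_flip' {n : ℕ} (v : Fin n → ZMod 2) (i : Fin n) :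
    hammingDist v (flipBit v i) = 1 := by
  rw [hammingDist_comm]; exact dist_flip v i

lemma dist2 {n : ℕ} (v : Fin n → ZMod 2) {i j : Fin n} (hij : j ≠ i) :
    hammingDist (flipBit (flipBit v i) j) v = 2 := by
  rw [hammingDist]
  have : ({x | flipBit (flipBit v i) j x ≠ v x} : Finset (Fin n)) = {i, j} := by
    ext x
    by_cases hx : x = i <;> by_cases hy : x = j <;> simp_all [flip_apply]
  rw [this, Finset.card_insert_of_notMem (by simp [Ne.symm hij])]
  rfl

lemma near_iff {n : ℕ} (a b : Fin n → ZMod 2) :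
    hammingDist a b ≤ 1 ↔ a = b ∨ ∃ ℓ, a = flipBit b ℓ := by
  constructor
  · intro hd
    rcases Nat.le_one_iff_eq_zero_or_eq_one.mp hd with h0 | h1
    · exact Or.inl (hammingDist_eq_zero.mp h0)
    · right
      rw [hammingDist] at h1
      obtain ⟨ℓ, hℓ⟩ := Finset.card_eq_one.mp h1
      refine ⟨ℓ, funext fun x => ?_⟩
      by_cases hx : x = ℓ
      · subst hx
        have : a x ≠ b x := by
          have : x ∈ ({y | a y ≠ b y} : Finset (Fin n)) := hℓ ▸ Finset.mem_singleton_self x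
          simpa using this
        rw [flip_apply, if_pos rfl]
        exact (zmod2_ne_iff _ _).mp this
      · have : x ∉ ({y | a y ≠ b y} : Finset (Fin n)) := by
          rw [hℓ]; simpa using hx
        simp only [Finset.mem_filter] at this
        rw [flip_apply, if_neg hx]
        simpa using this
  · rintro (rfl | ⟨ℓ, rfl⟩)
    · simp [hammingDist_self]
    · exact le_of_eq (dist_flip b ℓ)

theorem hamming_code_permutation_lemma (k : ℕ) (hk : 2 ≤ k) (n : ℕ) (hn : n = 2 ^ k - 1)
    (H : Set (Fin n → ZMod 2)) (hH : IsPerfectCode H)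
    (h : Fin n → ZMod 2) (hh : h ∈ H) (i : Fin n) :
    ∃ f : Equiv.Perm (Fin n), f i = i ∧
      ∀ j : Fin n, j ≠ i →
        ∃ h' ∈ H, h' ≠ h ∧ f j ≠ i ∧
          flipBit (flipBit h i) j = flipBit h' (f j) ∧
          ∀ h'' ∈ H, ∀ ℓ : Fin n,
            flipBit (flipBit h i) j = flipBit h'' ℓ → h'' = h' ∧ ℓ = f j := by
  -- no two distinct codewords are both within distance 1 of a vertex
  have uniq : ∀ w c1 c2 : Fin n → ZMod 2, c1 ∈ H → c2 ∈ H →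
      hammingDist w c1 ≤ 1 → hammingDist w c2 ≤ 1 → c1 = c2 := by
    intro w c1 c2 h1 h2 d1 d2
    obtain ⟨c, -, hu⟩ := hH w
    rw [hu c1 ⟨h1, d1⟩, hu c2 ⟨h2, d2⟩]
  have key : ∀ j : Fin n, j ≠ i → ∃ ℓ : Fin n, ℓ ≠ i ∧ ∃ h' ∈ H, h' ≠ h ∧
      flipBit (flipBit h i) j = flipBit h' ℓ ∧
      ∀ h'' ∈ H, ∀ m : Fin n, flipBit (flipBit h i) j = flipBit h'' m → h'' = h' ∧ m = ℓ := by
    intro j hj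
    set v := flipBit (flipBit h i) j with hv
    obtain ⟨c, ⟨hcH, hcd⟩, hcu⟩ := hH v
    rcases (near_iff v c).mp hcd with hvc | ⟨ℓ, hvℓ⟩
    · -- c = v : contradiction, h and v both near flipBit h i
      exfalso
      have hne : h ≠ v := by
        intro he
        have h2 : flipBit h j = flipBit h i := by
          have := congrArg (fun w => flipBit w j) he
          simpa [hv, flipBit_flip_flip] using this
        exact hj (flip_idx_inj h2)
      have d1 : hammingDist (flipBit h i) h ≤ 1 := le_of_eq (dist_flip h i)
      have d2 : hammingDist (flipBit h i) v ≤ 1 := by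
        rw [hv]; exact le_of_eq (dist_flip' (flipBit h i) j)
      exact hne (uniq (flipBit h i) h v hh (by rw [hvc]; exact hcH) d1 d2)
    · refine ⟨ℓ, ?_, c, hcH, ?_, hvℓ, ?_⟩
      · -- ℓ ≠ i
        intro hℓi
        subst hℓi
        have hc : c = flipBit h j := by
          have : flipBit v ℓ = c := (flip_cancel hvℓ).symm
          rw [← this, hv, flip_comm, flipBit_flip_flip]
        have hch : c ≠ h := hc ▸ flip_ne h j
        have d1 : hammingDist h c ≤ 1 := by
          rw [hc, hammingDist_comm]; exact le_of_eq (dist_flip h j)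
        exact hch (uniq h c h hcH hh d1 (by simp [hammingDist_self]))
      · -- c ≠ h
        intro hch
        have hd2 := dist2 h hj
        rw [hv, hch, hd2] at hcd
        omega
      · intro h'' hm m hq
        have hd : hammingDist v h'' ≤ 1 := by
          rw [hq]; exact le_of_eq (dist_flip h'' m)
        have he : h'' = c := hcu h'' ⟨hm, hd⟩
        subst he
        exact ⟨rfl, flip_idx_inj (hvℓ ▸ hq : flipBit h'' ℓ = flipBit h'' m).symm⟩
  classical
  set g : Fin n → Fin n := fun j => if hj : j = i then i else (key j hj).choose with hg
  have gspec : ∀ j (hj : j ≠ i), g j ≠ i ∧ ∃ h' ∈ H, h' ≠ h ∧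
      flipBit (flipBit h i) j = flipBit h' (g j) ∧
      ∀ h'' ∈ H, ∀ m : Fin n, flipBit (flipBit h i) j = flipBit h'' m → h'' = h' ∧ m = g j := by
    intro j hj
    have hgj : g j = (key j hj).choose := by simp [hg, hj]
    rw [hgj]
    exact ⟨(key j hj).choose_spec.1, (key j hj).choose_spec.2⟩
  have ginj : Function.Injective g := by
    intro j1 j2 he
    by_cases h1 : j1 = i <;> by_cases h2 : j2 = i
    · rw [h1, h2]
    · exfalso; exact (gspec j2 h2).1 (by rw [← he, h1]; simp [hg])
    · exfalso; exact (gspec j1 h1).1 (by rw [he, h2]; simp [hg])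
    · obtain ⟨-, c1, hc1H, -, hq1, -⟩ := gspec j1 h1
      obtain ⟨-, c2, hc2H, -, hq2, -⟩ := gspec j2 h2
      rw [he] at hq1
      by_cases hcc : c1 = c2
      · subst hcc
        rw [← hq2] at hq1
        exact flip_idx_inj hq1
      · exfalso
        set ℓ := g j2 with hℓ
        -- w := flipBit (flipBit h i) ℓ is near both c1 and c2
        have e1 : flipBit c1 j1 = flipBit (flipBit h i) ℓ := by
          have : c1 = flipBit (flipBit (flipBit h i) j1) ℓ := flip_cancel hq1
          rw [this, flip_comm, flipBit_flip_flip]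
        have e2 : flipBit c2 j2 = flipBit (flipBit h i) ℓ := by
          have : c2 = flipBit (flipBit (flipBit h i) j2) ℓ := flip_cancel hq2
          rw [this, flip_comm, flipBit_flip_flip]
        have d1 : hammingDist (flipBit (flipBit h i) ℓ) c1 ≤ 1 := by
          rw [← e1]; exact le_of_eq (dist_flip c1 j1)
        have d2 : hammingDist (flipBit (flipBit h i) ℓ) c2 ≤ 1 := by
          rw [← e2]; exact le_of_eq (dist_flip c2 j2)
        exact hcc (uniq _ c1 c2 hc1H hc2H d1 d2)
  refine ⟨Equiv.ofBijective g (Finite.injective_iff_bijective.mp ginj), by simp [hg], ?_⟩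
  intro j hj
  obtain ⟨hgi, h', hH', hne, hq, hu⟩ := gspec j hj
  exact ⟨h', hH', hne, hgi, hq, hu⟩
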